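/- Let H be a complex Hilbert space, let δ > 0, let T be a bounded self-adjoint linear operator on H, and let S be a bounded linear operator on H with Im ⟪f, S f⟫ ≥ δ · ‖f‖² for all f ∈ H. Set A := T + S. Then there exists a bounded linear operator B on H such that B² = A, σ(B) is contained in the closed first quadrant {λ : Re λ ≥ 0 and Im λ ≥ 0}, and for every real x ≥ 0 one has ‖exp(x • (Complex.I • B))‖ ≤ 1. -/

import Mathlib

set_option maxHeartbeats 4000000
set_option synthInstance.maxHeartbeats 1000000

open NormedSpace

/-! ### Binomial series coefficients for `√(1+x)` -/

noncomputable def bcoef (n : ℕ) : ℝ := Ring.choose (1/2 : ℝ) n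

lemma bcoef_zero : bcoef 0 = 1 := Ring.choose_zero_right _

lemma descP_smeval_eq (n : ℕ) :
    (descPochhammer ℤ n).smeval ((1:ℝ)/2) = (n.factorial : ℝ) * bcoef n := by
  rw [Ring.descPochhammer_eq_factorial_smul_choose]
  simp [bcoef, nsmul_eq_mul]

lemma descP_succ (n : ℕ) : (descPochhammer ℤ (n+1)).smeval ((1:ℝ)/2)
    = (descPochhammer ℤ n).smeval ((1:ℝ)/2) * ((1:ℝ)/2 - n) := by
  rw [descPochhammer_succ_right]
  rw [Polynomial.smeval_mul]
  congr 1
  simp [Polynomial.smeval_sub, Polynomial.smeval_X, Polynomial.smeval_natCast]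

lemma bcoef_succ (n : ℕ) : bcoef (n+1) = bcoef n * ((1:ℝ)/2 - n) / (n+1) := by
  have h1 := descP_smeval_eq (n+1)
  have h2 := descP_succ n
  rw [descP_smeval_eq n] at h2
  rw [h2] at h1
  have hf : ((n+1).factorial : ℝ) = (n+1) * n.factorial := by
    rw [Nat.factorial_succ]; push_cast; ring
  rw [hf] at h1
  have hne : ((n:ℝ)+1) ≠ 0 := by positivity
  have hfne : (n.factorial : ℝ) ≠ 0 := by exact_mod_cast Nat.factorial_ne_zero n
  field_simp at h1 ⊢
  nlinarith [h1, sq_nonneg ((n:ℝ)),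
    mul_pos (Nat.cast_pos.mpr (Nat.factorial_pos n) : (0:ℝ) < n.factorial)
      (by positivity : (0:ℝ) < 1)]

lemma bcoef_one : bcoef 1 = 1/2 := by
  simpa [bcoef] using Ring.choose_one_right (1/2 : ℝ)

lemma abs_half_sub_le (n : ℕ) : |(1:ℝ)/2 - n| ≤ (n:ℝ) + 1 := by
  rcases le_or_gt ((1:ℝ)/2) n with h | h
  · rw [abs_of_nonpos (by linarith)]
    have : (0:ℝ) ≤ n := Nat.cast_nonneg n
    linarith
  · rw [abs_of_nonneg (by linarith)]
    have : (0:ℝ) ≤ n := Nat.cast_nonneg n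
    linarith

lemma abs_bcoef_succ (n : ℕ) : |bcoef (n+1)| = |bcoef n| * |(1:ℝ)/2 - n| / (n+1) := by
  rw [bcoef_succ, abs_div, abs_mul, abs_of_nonneg (by positivity : (0:ℝ) ≤ (n:ℝ)+1)]

lemma abs_bcoef_le_one : ∀ n, |bcoef n| ≤ 1 := by
  intro n
  induction n with
  | zero => simp [bcoef_zero]
  | succ n ih =>
    rw [abs_bcoef_succ]
    rw [div_le_one (by positivity : (0:ℝ) < (n:ℝ)+1)]
    calc |bcoef n| * |(1:ℝ)/2 - n| ≤ 1 * ((n:ℝ)+1) :=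
          mul_le_mul ih (abs_half_sub_le n) (abs_nonneg _) zero_le_one
      _ = (n:ℝ)+1 := one_mul _

lemma abs_bcoef_succ_succ (n : ℕ) (hn : 1 ≤ n) :
    |bcoef (n+1)| = |bcoef n| * ((n:ℝ) - 1/2) / (n+1) := by
  have h : |(1:ℝ)/2 - n| = (n:ℝ) - 1/2 := by
    have : (1:ℝ) ≤ n := by exact_mod_cast hn
    rw [abs_of_nonpos (by linarith)]; ring
  rw [abs_bcoef_succ, h]

lemma bcoef_partial_sum (N : ℕ) :
    ∑ n ∈ Finset.range N, |bcoef (n+1)| = 1 - 2*(N+1)*|bcoef (N+1)| := by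
  induction N with
  | zero =>
    simp [bcoef_one]
  | succ N ih =>
    rw [Finset.sum_range_succ, ih]
    have hrec := abs_bcoef_succ_succ (N+1) (by omega)
    push_cast at hrec ⊢
    rw [hrec]
    have hne : ((N:ℝ)+1+1) ≠ 0 := by positivity
    field_simp
    ring

lemma bcoef_tail_sum_le : ∀ N, ∑ n ∈ Finset.range N, |bcoef (n+1)| ≤ 1 := by
  intro N
  rw [bcoef_partial_sum]
  have h1 : 0 ≤ 2*((N:ℝ)+1)*|bcoef (N+1)| := by positivity
  linarith

lemma bcoef_tail_summable : Summable (fun n => |bcoef (n+1)|) :=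
  summable_of_sum_range_le (fun _ => abs_nonneg _) bcoef_tail_sum_le

lemma bcoef_tail_tsum_le : ∑' n, |bcoef (n+1)| ≤ 1 :=
  Summable.tsum_le_of_sum_range_le bcoef_tail_summable bcoef_tail_sum_le

lemma bcoef_vandermonde (n : ℕ) :
    ∑ ij ∈ Finset.HasAntidiagonal.antidiagonal n, bcoef ij.1 * bcoef ij.2 = if n ≤ 1 then 1 else 0 := by
  have h := Ring.add_choose_eq (r := (1/2:ℝ)) (s := (1/2:ℝ)) n (Commute.all _ _)
  have h2 : ((1:ℝ)/2 + 1/2) = ((1:ℕ):ℝ) := by norm_num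
  rw [h2, Ring.choose_natCast] at h
  simp only [bcoef]
  rw [← h]
  rcases n with _ | _ | n <;> simp [Nat.choose]

/-! ### Square root of `1 + K` by binomial series -/

lemma sqrt_one_add {𝔸 : Type*} [NormedRing 𝔸] [NormedAlgebra ℂ 𝔸] [CompleteSpace 𝔸]
    [NormOneClass 𝔸] (K : 𝔸) (q : ℝ) (hq0 : 0 ≤ q) (hq1 : q < 1) (hK : ‖K‖ ≤ q) :
    ∃ C : 𝔸, C * C = 1 + K ∧ ‖C - 1‖ ≤ q := by
  have hKn : ∀ n, ‖K ^ n‖ ≤ q ^ n := by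
    intro n
    cases n with
    | zero => simp
    | succ n =>
      calc ‖K ^ (n+1)‖ ≤ ‖K‖ ^ (n+1) := norm_pow_le' K n.succ_pos
        _ ≤ q ^ (n+1) := pow_le_pow_left₀ (norm_nonneg K) hK _
  have hterm : ∀ n, ‖(bcoef n : ℂ) • K ^ n‖ ≤ q ^ n := by
    intro n
    rw [norm_smul]
    calc ‖(bcoef n : ℂ)‖ * ‖K ^ n‖ ≤ 1 * q ^ n := by
          apply mul_le_mul _ (hKn n) (norm_nonneg _) zero_le_one
          simpa [Complex.norm_real] using abs_bcoef_le_one n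
      _ = q ^ n := one_mul _
  have hsumnorm : Summable (fun n => ‖(bcoef n : ℂ) • K ^ n‖) :=
    Summable.of_nonneg_of_le (fun n => norm_nonneg _) hterm
      (summable_geometric_of_lt_one hq0 hq1)
  have hsumv : Summable (fun n => (bcoef n : ℂ) • K ^ n) := hsumnorm.of_norm
  set C : 𝔸 := ∑' n, (bcoef n : ℂ) • K ^ n with hC
  refine ⟨C, ?_, ?_⟩
  · have hmul := tsum_mul_tsum_eq_tsum_sum_antidiagonal_of_summable_norm hsumnorm hsumnorm
    rw [← hC] at hmul
    have hterm2 : ∀ n : ℕ, (∑ ij ∈ Finset.HasAntidiagonal.antidiagonal n,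
        ((bcoef ij.1 : ℂ) • K ^ ij.1) * ((bcoef ij.2 : ℂ) • K ^ ij.2))
        = ((if n ≤ 1 then (1:ℝ) else 0 : ℝ) : ℂ) • K ^ n := by
      intro n
      have : ∀ ij ∈ Finset.HasAntidiagonal.antidiagonal n,
          ((bcoef ij.1 : ℂ) • K ^ ij.1) * ((bcoef ij.2 : ℂ) • K ^ ij.2)
          = ((bcoef ij.1 * bcoef ij.2 : ℝ) : ℂ) • K ^ n := by
        intro ij hij
        rw [smul_mul_smul_comm, ← pow_add, Finset.HasAntidiagonal.mem_antidiagonal.mp hij]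
        push_cast
        ring_nf
      rw [Finset.sum_congr rfl this, ← Finset.sum_smul]
      congr 1
      rw [← Complex.ofReal_sum]
      exact_mod_cast congrArg (Complex.ofReal) (bcoef_vandermonde n)
    rw [hmul]
    simp_rw [hterm2]
    rw [tsum_eq_sum (s := {0, 1}) (by
      intro n hn
      have hn2 : ¬ (n ≤ 1) := by
        simp only [Finset.mem_insert, Finset.mem_singleton] at hn
        omega
      simp [hn2])]
    rw [Finset.sum_insert (by simp), Finset.sum_singleton]
    norm_num
  · have hCm1 : C - 1 = ∑' n, (bcoef (n+1) : ℂ) • K ^ (n+1) := by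
      rw [hC, Summable.tsum_eq_zero_add hsumv]
      simp [bcoef_zero]
    rw [hCm1]
    have hbound : ∀ n, ‖(bcoef (n+1) : ℂ) • K ^ (n+1)‖ ≤ q * |bcoef (n+1)| := by
      intro n
      rw [norm_smul]
      have h1 : ‖K ^ (n+1)‖ ≤ q ^ (n+1) := hKn (n+1)
      have h2 : q ^ (n+1) ≤ q := by
        calc q ^ (n+1) = q * q ^ n := by ring
          _ ≤ q * 1 := by
              apply mul_le_mul_of_nonneg_left _ hq0
              exact pow_le_one₀ hq0 hq1.le
          _ = q := mul_one q
      calc ‖(bcoef (n+1) : ℂ)‖ * ‖K ^ (n+1)‖ = |bcoef (n+1)| * ‖K ^ (n+1)‖ := by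
            rw [Complex.norm_real]; rfl
        _ ≤ |bcoef (n+1)| * q :=
            mul_le_mul_of_nonneg_left (h1.trans h2) (abs_nonneg _)
        _ = q * |bcoef (n+1)| := mul_comm _ _
    calc ‖∑' n, (bcoef (n+1) : ℂ) • K ^ (n+1)‖ ≤ ∑' n, ‖(bcoef (n+1) : ℂ) • K ^ (n+1)‖ :=
          norm_tsum_le_tsum_norm ((summable_nat_add_iff 1).mpr hsumnorm)
      _ ≤ ∑' n, q * |bcoef (n+1)| :=
          Summable.tsum_le_tsum hbound ((summable_nat_add_iff 1).mpr hsumnorm)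
            (bcoef_tail_summable.mul_left q)
      _ = q * ∑' n, |bcoef (n+1)| := tsum_mul_left
      _ ≤ q * 1 := mul_le_mul_of_nonneg_left bcoef_tail_tsum_le hq0
      _ = q := mul_one q

/-! ### Hilbert space lemmas -/

section Hilbert

variable {H : Type*} [NormedAddCommGroup H] [InnerProductSpace ℂ H] [CompleteSpace H]

omit [CompleteSpace H] in
lemma re_inner_symm' (g h : H) : (inner ℂ g h : ℂ).re = (inner ℂ h g : ℂ).re := by
  rw [← inner_conj_symm g h, Complex.conj_re]

/-- Semigroup growth bound from the numerical range. -/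
lemma exp_apply_norm_sq_le (M : H →L[ℂ] H) (b : ℝ)
    (hM : ∀ f : H, (inner ℂ f (M f) : ℂ).re ≤ b * ‖f‖ ^ 2) (x : ℝ) (hx : 0 ≤ x) (f : H) :
    ‖exp (x • M) f‖ ^ 2 ≤ Real.exp (2 * b * x) * ‖f‖ ^ 2 := by
  set u : ℝ → H := fun t => exp (t • M) f with hu
  have hud : ∀ t : ℝ, HasDerivAt u (M (u t)) t := by
    intro t
    have h1 : HasDerivAt (fun s : ℝ => exp (s • M)) (M * exp (t • M)) t :=
      hasDerivAt_exp_smul_const' M t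
    have h2 := (((ContinuousLinearMap.apply ℂ H f).restrictScalars
      ℝ).hasFDerivAt).comp_hasDerivAt t h1
    simpa [hu, Function.comp_def] using h2
  set φ : ℝ → ℝ := fun t => Real.exp (-(2 * b) * t) * ‖u t‖ ^ 2 with hφ
  have hφd : ∀ t : ℝ, HasDerivAt φ
      (Real.exp (-(2 * b) * t) * (2 * (inner ℂ (u t) (M (u t)) : ℂ).re - 2 * b * ‖u t‖ ^ 2)) t := by
    intro t
    have hinner : HasDerivAt (fun s => (inner ℂ (u s) (u s) : ℂ))
        ((inner ℂ (u t) (M (u t)) : ℂ) + inner ℂ (M (u t)) (u t)) t :=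
      (hud t).inner ℂ (hud t)
    have hre : HasDerivAt (fun s => ((inner ℂ (u s) (u s) : ℂ)).re)
        (((inner ℂ (u t) (M (u t)) : ℂ) + inner ℂ (M (u t)) (u t)).re) t :=
      (Complex.reCLM.hasFDerivAt.comp_hasDerivAt t hinner)
    have hns : ∀ g : H, ((inner ℂ g g : ℂ)).re = ‖g‖ ^ 2 := by
      intro g
      have := inner_self_eq_norm_sq (𝕜 := ℂ) g
      simpa using this
    have hre' : HasDerivAt (fun s => ‖u s‖ ^ 2)
        (2 * (inner ℂ (u t) (M (u t)) : ℂ).re) t := by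
      simp_rw [hns] at hre
      convert hre using 1
      rw [Complex.add_re, re_inner_symm' (M (u t)) (u t)]; ring
    have hexp : HasDerivAt (fun s : ℝ => Real.exp (-(2 * b) * s))
        ((Real.exp (-(2 * b) * t)) * (-(2 * b))) t := by
      simpa [mul_comm] using ((hasDerivAt_id t).const_mul (-(2 * b))).exp
    have := hexp.mul hre'
    refine this.congr_deriv ?_
    ring
  have hanti : AntitoneOn φ (Set.Ici (0:ℝ)) := by
    apply antitoneOn_of_deriv_nonpos (convex_Ici 0)
    · exact fun t _ => (hφd t).continuousAt.continuousWithinAt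
    · intro t _
      exact (hφd t).differentiableAt.differentiableWithinAt
    · intro t _
      rw [(hφd t).deriv]
      have h1 : (inner ℂ (u t) (M (u t)) : ℂ).re ≤ b * ‖u t‖ ^ 2 := hM (u t)
      have h2 : (0:ℝ) < Real.exp (-(2 * b) * t) := Real.exp_pos _
      nlinarith
  have h0 : φ x ≤ φ 0 := hanti Set.self_mem_Ici (Set.mem_Ici.2 hx) hx
  have hφ0 : φ 0 = ‖f‖ ^ 2 := by simp [hφ, hu]
  rw [hφ0] at h0
  have key := mul_le_mul_of_nonneg_left h0 (le_of_lt (Real.exp_pos (2 * b * x)))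
  have hcancel : Real.exp (2 * b * x) * Real.exp (-(2 * b) * x) = 1 := by
    rw [← Real.exp_add]; ring_nf; exact Real.exp_zero
  have final : ‖u x‖ ^ 2 ≤ Real.exp (2 * b * x) * ‖f‖ ^ 2 := by
    calc ‖u x‖ ^ 2 = Real.exp (2*b*x) * (Real.exp (-(2*b)*x) * ‖u x‖ ^ 2) := by
          rw [← mul_assoc, hcancel, one_mul]
      _ ≤ Real.exp (2 * b * x) * ‖f‖ ^ 2 := key
  exact final

/-- If `X ≥ c > 0` and the anticommutator `XY + YX` is nonneg, then `Y` is nonneg. -/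
lemma nonneg_of_anticommutator (X Y : H →L[ℂ] H)
    (hXsym : ∀ a b : H, (inner ℂ (X a) b : ℂ) = inner ℂ a (X b))
    (c : ℝ) (hc : 0 < c) (hXc : ∀ f : H, c * ‖f‖ ^ 2 ≤ (inner ℂ f (X f) : ℂ).re)
    (hP : ∀ f : H, 0 ≤ (inner ℂ f ((X * Y + Y * X) f) : ℂ).re) (f : H) :
    0 ≤ (inner ℂ f (Y f) : ℂ).re := by
  set g : ℝ → H := fun t => exp (t • (-X)) f with hg
  have hgd : ∀ t : ℝ, HasDerivAt g (-(X (g t))) t := by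
    intro t
    have h1 : HasDerivAt (fun s : ℝ => exp (s • (-X))) ((-X) * exp (t • (-X))) t :=
      hasDerivAt_exp_smul_const' (-X) t
    have h2 := (((ContinuousLinearMap.apply ℂ H f).restrictScalars
      ℝ).hasFDerivAt).comp_hasDerivAt t h1
    show HasDerivAt (fun t : ℝ => exp (t • (-X)) f) (-(X (exp (t • (-X)) f))) t
    simpa [smul_neg, Function.comp_def] using h2
  set ψ : ℝ → ℝ := fun t => (inner ℂ (g t) (Y (g t)) : ℂ).re with hψ
  have hψd : ∀ t : ℝ, HasDerivAt ψ (-(inner ℂ (g t) ((X * Y + Y * X) (g t)) : ℂ).re) t := by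
    intro t
    have hYg : HasDerivAt (fun s => Y (g s)) (Y (-(X (g t)))) t := by
      exact ((Y.restrictScalars ℝ).hasFDerivAt).comp_hasDerivAt t (hgd t)
    have hinner := ((hgd t).inner ℂ hYg :
      HasDerivAt (fun s => (inner ℂ (g s) (Y (g s)) : ℂ))
        ((inner ℂ (g t) (Y (-(X (g t)))) : ℂ) + inner ℂ (-(X (g t))) (Y (g t))) t)
    have hre := Complex.reCLM.hasFDerivAt.comp_hasDerivAt t hinner
    refine hre.congr_deriv ?_
    have e1 : (inner ℂ (-(X (g t))) (Y (g t)) : ℂ) = -(inner ℂ (g t) ((X * Y) (g t)) : ℂ) := by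
      rw [inner_neg_left, hXsym]
      rfl
    have e2 : (inner ℂ (g t) (Y (-(X (g t)))) : ℂ) = -(inner ℂ (g t) ((Y * X) (g t)) : ℂ) := by
      rw [map_neg, inner_neg_right]
      rfl
    simp only [ContinuousLinearMap.coe_coe, Complex.reCLM_apply]
    rw [e1, e2]
    simp only [ContinuousLinearMap.add_apply, inner_add_right]
    simp [Complex.add_re]
  have hanti : AntitoneOn ψ (Set.Ici (0:ℝ)) := by
    apply antitoneOn_of_deriv_nonpos (convex_Ici 0)
    · exact fun t _ => (hψd t).continuousAt.continuousWithinAt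
    · exact fun t _ => (hψd t).differentiableAt.differentiableWithinAt
    · intro t _
      rw [(hψd t).deriv]
      have := hP (g t)
      simp at this ⊢
      linarith
  have hlow : ∀ t : ℝ, 0 ≤ t → -(‖Y‖ * (Real.exp (2 * (-c) * t) * ‖f‖ ^ 2)) ≤ ψ t := by
    intro t ht
    have hb : ∀ h : H, (inner ℂ h ((-X) h) : ℂ).re ≤ (-c) * ‖h‖ ^ 2 := by
      intro h
      have := hXc h
      simp only [ContinuousLinearMap.neg_apply, inner_neg_right, Complex.neg_re]
      linarith
    have hg2 : ‖g t‖ ^ 2 ≤ Real.exp (2 * (-c) * t) * ‖f‖ ^ 2 :=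
      exp_apply_norm_sq_le (-X) (-c) hb t ht f
    have habs : |(inner ℂ (g t) (Y (g t)) : ℂ).re| ≤ ‖Y‖ * ‖g t‖ ^ 2 := by
      have h1 : |(inner ℂ (g t) (Y (g t)) : ℂ).re| ≤ ‖(inner ℂ (g t) (Y (g t)) : ℂ)‖ :=
        Complex.abs_re_le_norm _
      have h2 : ‖(inner ℂ (g t) (Y (g t)) : ℂ)‖ ≤ ‖g t‖ * ‖Y (g t)‖ := norm_inner_le_norm _ _
      have h3 : ‖Y (g t)‖ ≤ ‖Y‖ * ‖g t‖ := Y.le_opNorm _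
      calc |(inner ℂ (g t) (Y (g t)) : ℂ).re| ≤ ‖g t‖ * ‖Y (g t)‖ := h1.trans h2
        _ ≤ ‖g t‖ * (‖Y‖ * ‖g t‖) := mul_le_mul_of_nonneg_left h3 (norm_nonneg _)
        _ = ‖Y‖ * ‖g t‖ ^ 2 := by ring
    have h4 : ‖Y‖ * ‖g t‖ ^ 2 ≤ ‖Y‖ * (Real.exp (2 * (-c) * t) * ‖f‖ ^ 2) :=
      mul_le_mul_of_nonneg_left hg2 (norm_nonneg _)
    have h5 : -(‖Y‖ * (Real.exp (2 * (-c) * t) * ‖f‖ ^ 2)) ≤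
        -|(inner ℂ (g t) (Y (g t)) : ℂ).re| := by
      linarith [habs.trans h4]
    linarith [neg_abs_le ((inner ℂ (g t) (Y (g t)) : ℂ).re)]
  have htend : Filter.Tendsto (fun t : ℝ => -(‖Y‖ * (Real.exp (2 * (-c) * t) * ‖f‖ ^ 2)))
      Filter.atTop (nhds 0) := by
    have h1 : Filter.Tendsto (fun t : ℝ => 2 * (-c) * t) Filter.atTop Filter.atBot := by
      apply Filter.Tendsto.const_mul_atTop_of_neg (by linarith) Filter.tendsto_id
    have h2 := Real.tendsto_exp_atBot.comp h1
    have h3 : Filter.Tendsto (fun t : ℝ => -(‖Y‖ * (Real.exp (2 * (-c) * t) * ‖f‖ ^ 2)))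
        Filter.atTop (nhds (-(‖Y‖ * (0 * ‖f‖ ^ 2)))) :=
      (((h2.mul_const (‖f‖ ^ 2)).const_mul ‖Y‖).neg)
    simpa using h3
  have hev : ∀ᶠ t in Filter.atTop, -(‖Y‖ * (Real.exp (2 * (-c) * t) * ‖f‖ ^ 2)) ≤ ψ 0 := by
    filter_upwards [Filter.eventually_ge_atTop (0:ℝ)] with t ht
    exact (hlow t ht).trans (hanti Set.self_mem_Ici (Set.mem_Ici.2 ht) ht)
  have h0 : (0:ℝ) ≤ ψ 0 := le_of_tendsto htend hev
  have heq : ψ 0 = (inner ℂ f (Y f) : ℂ).re := by simp [hψ, hg]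
  linarith [h0, heq.symm.le]

end Hilbert

/-- Well-posedness of the pseudodifferential parabolic equation (bounded-operator form):
if `T` is bounded self-adjoint and the numerical range of `S` lies in `{Im λ ≥ δ}` for some
`δ > 0`, then `A := T + S` has a square root `B` with spectrum in the closed first quadrant,
and `x ↦ exp (x • (i • B))` is contractive for `x ≥ 0`. -/
theorem pdpe_well_posed {H : Type*} [NormedAddCommGroup H] [InnerProductSpace ℂ H]
    [CompleteSpace H] (δ : ℝ) (hδ : 0 < δ) (T S : H →L[ℂ] H)
    (hT : ∀ f g : H, (inner ℂ (T f) g : ℂ) = inner ℂ f (T g))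
    (hS : ∀ f : H, δ * ‖f‖ ^ 2 ≤ (inner ℂ f (S f) : ℂ).im) :
    ∃ B : H →L[ℂ] H, B ^ 2 = T + S ∧
      (∀ z ∈ spectrum ℂ B, 0 ≤ z.re ∧ 0 ≤ z.im) ∧
      (∀ x : ℝ, 0 ≤ x → ‖NormedSpace.exp (x • (Complex.I • B))‖ ≤ 1) := by
  rcases subsingleton_or_nontrivial H with hsub | hnt
  · haveI : Subsingleton (H →L[ℂ] H) :=
      ⟨fun a b => ContinuousLinearMap.ext fun f => Subsingleton.elim _ _⟩
    refine ⟨0, Subsingleton.elim _ _, ?_, ?_⟩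
    · intro z hz
      rw [spectrum.mem_iff] at hz
      exact absurd (isUnit_of_subsingleton _) hz
    · intro x _
      have h0 : NormedSpace.exp (x • (Complex.I • (0 : H →L[ℂ] H))) = 0 :=
        Subsingleton.elim _ _
      rw [h0]
      simp
  · -- Nontrivial case
    set A : H →L[ℂ] H := T + S with hA
    have hTim : ∀ f : H, (inner ℂ f (T f) : ℂ).im = 0 := by
      intro f
      have h1 : (inner ℂ (T f) f : ℂ) = inner ℂ f (T f) := hT f f
      have h2 : (starRingEnd ℂ) (inner ℂ f (T f) : ℂ) = inner ℂ (T f) f := inner_conj_symm _ _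
      rw [h1] at h2
      exact Complex.conj_eq_iff_im.mp h2
    have hAim : ∀ f : H, δ * ‖f‖ ^ 2 ≤ (inner ℂ f (A f) : ℂ).im := by
      intro f
      have he : (inner ℂ f (A f) : ℂ) = inner ℂ f (T f) + inner ℂ f (S f) := by
        rw [hA]; simp [inner_add_right]
      rw [he, Complex.add_im, hTim f, zero_add]
      exact hS f
    set A' : H →L[ℂ] H := (-Complex.I) • A with hA'
    have hA're : ∀ f : H, δ * ‖f‖ ^ 2 ≤ (inner ℂ f (A' f) : ℂ).re := by
      intro f
      have he : (inner ℂ f (A' f) : ℂ) = (-Complex.I) * inner ℂ f (A f) := by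
        rw [hA']; simp [inner_smul_right]
      rw [he]
      have : ((-Complex.I) * (inner ℂ f (A f) : ℂ)).re = (inner ℂ f (A f) : ℂ).im := by
        simp [Complex.mul_re]
      rw [this]
      exact hAim f
    set M : ℝ := ‖A'‖ with hM
    have hδM : δ ≤ M := by
      obtain ⟨f₀, hf₀⟩ := exists_ne (0 : H)
      have hn : (0:ℝ) < ‖f₀‖ := norm_pos_iff.mpr hf₀
      have h1 : δ * ‖f₀‖ ^ 2 ≤ (inner ℂ f₀ (A' f₀) : ℂ).re := hA're f₀
      have h2 : (inner ℂ f₀ (A' f₀) : ℂ).re ≤ ‖(inner ℂ f₀ (A' f₀) : ℂ)‖ := Complex.re_le_norm _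
      have h3 : ‖(inner ℂ f₀ (A' f₀) : ℂ)‖ ≤ ‖f₀‖ * ‖A' f₀‖ := norm_inner_le_norm _ _
      have h4 : ‖A' f₀‖ ≤ M * ‖f₀‖ := A'.le_opNorm f₀
      have h5 : δ * ‖f₀‖ ^ 2 ≤ M * ‖f₀‖ ^ 2 := by nlinarith
      nlinarith [h5, mul_pos hn hn, sq_nonneg ‖f₀‖]
    have hM0 : (0:ℝ) < M := lt_of_lt_of_le hδ hδM
    set r : ℝ := M ^ 2 / δ with hr
    have hr0 : (0:ℝ) < r := by positivity
    set q : ℝ := Real.sqrt (1 - δ^2 / M^2) with hq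
    have hdm1 : δ^2 / M^2 ≤ 1 := by
      rw [div_le_one (by positivity)]
      nlinarith
    have hq0 : 0 ≤ q := Real.sqrt_nonneg _
    have hqsq : q ^ 2 = 1 - δ^2 / M^2 := Real.sq_sqrt (by linarith)
    have hq1 : q < 1 := by
      have hpos : 0 < δ^2 / M^2 := by positivity
      nlinarith
    set K : H →L[ℂ] H := ((r:ℝ):ℂ)⁻¹ • A' - 1 with hK
    have hKapp : ∀ f : H, K f = ((r:ℝ):ℂ)⁻¹ • (A' f) - f := by
      intro f; rw [hK]; simp
    have hKf : ∀ f : H, ‖K f‖ ≤ q * ‖f‖ := by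
      intro f
      have hsq : ‖K f‖ ^ 2 ≤ (q * ‖f‖) ^ 2 := by
        rw [hKapp f]
        rw [@norm_sub_sq ℂ H _ _ _ (((r:ℝ):ℂ)⁻¹ • (A' f)) f]
        have e1 : ‖((r:ℝ):ℂ)⁻¹ • (A' f)‖ = r⁻¹ * ‖A' f‖ := by
          rw [norm_smul]
          congr 1
          rw [norm_inv, Complex.norm_real, Real.norm_eq_abs, abs_of_pos hr0]
        have e2 : (inner ℂ (((r:ℝ):ℂ)⁻¹ • (A' f)) f : ℂ).re = r⁻¹ * (inner ℂ f (A' f) : ℂ).re := by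
          rw [inner_smul_left]
          have : (starRingEnd ℂ) (((r:ℝ):ℂ)⁻¹) = ((r:ℝ):ℂ)⁻¹ := by
            rw [← Complex.ofReal_inv, Complex.conj_ofReal]
          rw [this, ← Complex.ofReal_inv, Complex.re_ofReal_mul]
          rw [re_inner_symm']
        simp only [RCLike.re_to_complex]
        rw [e1, e2]
        have hAf : ‖A' f‖ ≤ M * ‖f‖ := A'.le_opNorm f
        have hre := hA're f
        have hrinv : r⁻¹ = δ / M^2 := by rw [hr]; field_simp
        have hAf2 : (r⁻¹ * ‖A' f‖)^2 ≤ (δ^2/M^2) * ‖f‖^2 := by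
          rw [hrinv]
          have h1 : 0 ≤ ‖A' f‖ := norm_nonneg _
          have h2 : 0 ≤ ‖f‖ := norm_nonneg _
          have h3 : (δ / M^2 * ‖A' f‖)^2 ≤ (δ / M^2)^2 * (M * ‖f‖)^2 := by
            rw [mul_pow]
            apply mul_le_mul_of_nonneg_left _ (by positivity)
            exact pow_le_pow_left₀ h1 hAf 2
          calc (δ / M^2 * ‖A' f‖)^2 ≤ (δ / M^2)^2 * (M * ‖f‖)^2 := h3
            _ = (δ^2/M^2) * ‖f‖^2 := by field_simp
        have hterm : r⁻¹ * δ * ‖f‖^2 ≤ r⁻¹ * (inner ℂ f (A' f) : ℂ).re := by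
          have := mul_le_mul_of_nonneg_left hre (by positivity : (0:ℝ) ≤ r⁻¹)
          calc r⁻¹ * δ * ‖f‖^2 = r⁻¹ * (δ * ‖f‖^2) := by ring
            _ ≤ r⁻¹ * (inner ℂ f (A' f) : ℂ).re := this
        have hrd : r⁻¹ * δ = δ^2 / M^2 := by rw [hrinv]; field_simp
        have expand : (r⁻¹ * ‖A' f‖)^2 - 2 * (r⁻¹ * (inner ℂ f (A' f) : ℂ).re) + ‖f‖^2
            ≤ (q * ‖f‖)^2 := by
          rw [mul_pow q]
          rw [hqsq]
          have h1 : (r⁻¹ * ‖A' f‖)^2 ≤ (δ^2/M^2) * ‖f‖^2 := hAf2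
          have h2 : (δ^2/M^2) * ‖f‖^2 = r⁻¹ * δ * ‖f‖^2 := by rw [hrd]
          nlinarith [hterm]
        exact expand
      have h1 : 0 ≤ ‖K f‖ := norm_nonneg _
      have h2 : 0 ≤ q * ‖f‖ := by positivity
      nlinarith
    have hKnorm : ‖K‖ ≤ q := ContinuousLinearMap.opNorm_le_bound _ hq0 hKf
    obtain ⟨C, hCC, hC1⟩ := sqrt_one_add K q hq0 hq1 hKnorm
    have h1K : (1 : H →L[ℂ] H) + K = ((r:ℝ):ℂ)⁻¹ • A' := by
      rw [hK]; abel
    -- numerical range bounds for C and K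
    have hKinner : ∀ f : H, |(inner ℂ f (K f) : ℂ).re| ≤ q * ‖f‖^2 := by
      intro f
      have h1 : |(inner ℂ f (K f) : ℂ).re| ≤ ‖(inner ℂ f (K f) : ℂ)‖ := Complex.abs_re_le_norm _
      have h2 : ‖(inner ℂ f (K f) : ℂ)‖ ≤ ‖f‖ * ‖K f‖ := norm_inner_le_norm _ _
      have h3 : ‖f‖ * ‖K f‖ ≤ ‖f‖ * (q * ‖f‖) :=
        mul_le_mul_of_nonneg_left (hKf f) (norm_nonneg _)
      calc |(inner ℂ f (K f) : ℂ).re| ≤ ‖f‖ * (q * ‖f‖) := (h1.trans h2).trans h3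
        _ = q * ‖f‖^2 := by ring
    have hCpos : ∀ f : H, (1 - q) * ‖f‖^2 ≤ (inner ℂ f (C f) : ℂ).re := by
      intro f
      have he : C f = f + (C - 1) f := by simp
      have h0 : (inner ℂ f (C f) : ℂ).re = ‖f‖^2 + (inner ℂ f ((C-1) f) : ℂ).re := by
        rw [he, inner_add_right, Complex.add_re]
        congr 1
        have := inner_self_eq_norm_sq (𝕜 := ℂ) f
        simpa using this
      have h1 : |(inner ℂ f ((C-1) f) : ℂ).re| ≤ q * ‖f‖^2 := by
        have ha : |(inner ℂ f ((C-1) f) : ℂ).re| ≤ ‖(inner ℂ f ((C-1) f) : ℂ)‖ :=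
          Complex.abs_re_le_norm _
        have hb : ‖(inner ℂ f ((C-1) f) : ℂ)‖ ≤ ‖f‖ * ‖(C-1) f‖ := norm_inner_le_norm _ _
        have hc : ‖(C-1) f‖ ≤ q * ‖f‖ := by
          calc ‖(C-1) f‖ ≤ ‖C - 1‖ * ‖f‖ := (C-1).le_opNorm f
            _ ≤ q * ‖f‖ := mul_le_mul_of_nonneg_right hC1 (norm_nonneg _)
        calc |(inner ℂ f ((C-1) f) : ℂ).re| ≤ ‖f‖ * (q * ‖f‖) :=
              ha.trans (hb.trans (mul_le_mul_of_nonneg_left hc (norm_nonneg _)))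
          _ = q * ‖f‖^2 := by ring
      have := abs_le.mp h1
      rw [h0]
      nlinarith [this.1]
    -- real and imaginary parts of C
    set D : H →L[ℂ] H := ContinuousLinearMap.adjoint C with hD
    have hstarC : star C = D := rfl
    have hstarD : star D = C := by
      rw [hD, ContinuousLinearMap.star_eq_adjoint, ContinuousLinearMap.adjoint_adjoint]
    have hDinner : ∀ f : H, (inner ℂ f (D f) : ℂ) = (starRingEnd ℂ) (inner ℂ f (C f) : ℂ) := by
      intro f
      rw [hD, ContinuousLinearMap.adjoint_inner_right, ← inner_conj_symm]
    set Rop : H →L[ℂ] H := ((1:ℂ)/2) • (C + D) with hRop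
    set Jop : H →L[ℂ] H := (Complex.I/2) • (D - C) with hJop
    have hRsa : IsSelfAdjoint Rop := by
      rw [IsSelfAdjoint, hRop, star_smul, star_add, hstarC, hstarD]
      rw [show star ((1:ℂ)/2) = (1:ℂ)/2 from by
        rw [Complex.star_def]
        exact Complex.conj_eq_iff_im.mpr (by norm_num)]
      rw [add_comm]
    have hJsa : IsSelfAdjoint Jop := by
      rw [IsSelfAdjoint, hJop, star_smul, star_sub, hstarC, hstarD]
      rw [show star (Complex.I/2) = -(Complex.I/2) from by
        rw [Complex.star_def, map_div₀, Complex.conj_I,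
          show (starRingEnd ℂ) 2 = 2 from Complex.conj_eq_iff_im.mpr (by norm_num), neg_div]]
      rw [neg_smul, ← smul_neg, neg_sub]
    have hRre : ∀ f : H, (inner ℂ f (Rop f) : ℂ).re = (inner ℂ f (C f) : ℂ).re := by
      intro f
      rw [hRop]
      simp only [ContinuousLinearMap.smul_apply, ContinuousLinearMap.add_apply,
        inner_smul_right, inner_add_right]
      rw [hDinner f]
      simp [Complex.mul_re, Complex.add_re, Complex.div_re]
      rw [re_inner_symm' (C f) f]
      ring
    have hJre : ∀ f : H, (inner ℂ f (Jop f) : ℂ).re = (inner ℂ f (C f) : ℂ).im := by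
      intro f
      rw [hJop]
      simp only [ContinuousLinearMap.smul_apply, ContinuousLinearMap.sub_apply,
        inner_smul_right, inner_sub_right]
      rw [hDinner f]
      simp [Complex.mul_re, Complex.sub_re, Complex.div_re, Complex.div_im]
      rw [show (inner ℂ (C f) f : ℂ).im = -(inner ℂ f (C f) : ℂ).im from by
        rw [← inner_conj_symm f (C f), Complex.conj_im]
        exact (neg_neg _).symm]
      ring
    -- |J| via continuous functional calculus
    set P : H →L[ℂ] H := cfc (fun t : ℝ => |t|) Jop with hP
    have hPsa : IsSelfAdjoint P := cfc_predicate _ _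
    have hPsq : P * P = Jop * Jop := by
      rw [hP, ← cfc_mul _ _ Jop (by fun_prop) (by fun_prop)]
      have heq : (fun t : ℝ => |t| * |t|) = fun t : ℝ => t * t := by
        ext t; rw [abs_mul_abs_self]
      rw [heq, cfc_mul _ _ Jop (by fun_prop) (by fun_prop), cfc_id' ℝ Jop]
    have hPposOp : 0 ≤ P := cfc_nonneg (fun t _ => abs_nonneg t)
    have inner_nonneg_of_nonneg : ∀ (W : H →L[ℂ] H), 0 ≤ W → ∀ f : H,
        0 ≤ (inner ℂ f (W f) : ℂ).re := by
      intro W hW f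
      have := ((ContinuousLinearMap.nonneg_iff_isPositive W).mp hW).inner_nonneg_left f
      have e : (inner ℂ (W f) f : ℂ).re = (inner ℂ f (W f) : ℂ).re := re_inner_symm' _ _
      rw [← e]
      exact (Complex.le_def.mp this).1
    have hPpos : ∀ f : H, 0 ≤ (inner ℂ f (P f) : ℂ).re := inner_nonneg_of_nonneg P hPposOp
    have hPmJ : ∀ f : H, 0 ≤ (inner ℂ f ((P - Jop) f) : ℂ).re := by
      apply inner_nonneg_of_nonneg
      have h : P - Jop = cfc (fun t : ℝ => |t| - t) Jop := by
        rw [cfc_sub _ _ Jop (by fun_prop) (by fun_prop), cfc_id' ℝ Jop, hP]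
      rw [h]
      exact cfc_nonneg (fun t _ => by simp [le_abs_self])
    have hPpJ : ∀ f : H, 0 ≤ (inner ℂ f ((P + Jop) f) : ℂ).re := by
      apply inner_nonneg_of_nonneg
      have h : P + Jop = cfc (fun t : ℝ => |t| + t) Jop := by
        rw [cfc_add (a := Jop) (fun t : ℝ => |t|) (fun t : ℝ => t), cfc_id' ℝ Jop, hP]
      rw [h]
      exact cfc_nonneg (fun t _ => by linarith [neg_abs_le t])
    -- the anticommutator identity
    set X : H →L[ℂ] H := Rop + P with hX
    set Y : H →L[ℂ] H := Rop - P with hY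
    have hRJ : Rop * Rop - Jop * Jop = ((1:ℂ)/2) • (C * C + D * D) := by
      rw [hRop, hJop]
      rw [smul_mul_smul_comm, smul_mul_smul_comm]
      simp only [mul_add, add_mul, mul_sub, sub_mul]
      have e1 : ((1:ℂ)/2) * ((1:ℂ)/2) = (1:ℂ)/4 := by norm_num
      have e2 : (Complex.I/2) * (Complex.I/2) = -((1:ℂ)/4) := by
        simp [div_mul_div_comm, Complex.I_mul_I]
        norm_num
      rw [e1, e2]
      module
    have hXY : X * Y + Y * X = C * C + D * D := by
      have h1 : X * Y + Y * X = (2:ℂ) • (Rop * Rop) - (2:ℂ) • (P * P) := by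
        rw [hX, hY]
        simp only [mul_add, add_mul, mul_sub, sub_mul]
        module
      rw [h1, hPsq]
      have h2 : (2:ℂ) • (Rop * Rop) - (2:ℂ) • (Jop * Jop)
          = (2:ℂ) • (Rop * Rop - Jop * Jop) := by module
      rw [h2, hRJ, smul_smul]
      norm_num
    have hDD : D * D = ContinuousLinearMap.adjoint (C * C) := by
      rw [hD, show C * C = C.comp C from rfl, ContinuousLinearMap.adjoint_comp]
      rfl
    have hanti : ∀ f : H, 0 ≤ (inner ℂ f ((X * Y + Y * X) f) : ℂ).re := by
      intro f
      rw [hXY]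
      have he : (inner ℂ f ((C * C + D * D) f) : ℂ)
          = inner ℂ f ((C*C) f) + inner ℂ f ((D*D) f) := by
        simp [inner_add_right]
      have he2 : (inner ℂ f ((D*D) f) : ℂ) = (starRingEnd ℂ) (inner ℂ f ((C*C) f) : ℂ) := by
        rw [hDD, ContinuousLinearMap.adjoint_inner_right, ← inner_conj_symm]
      rw [he, he2, Complex.add_re, Complex.conj_re]
      have h3 : (inner ℂ f ((C*C) f) : ℂ).re = ‖f‖^2 + (inner ℂ f (K f) : ℂ).re := by
        rw [hCC]
        have : ((1 + K : H →L[ℂ] H)) f = f + K f := by simp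
        rw [this, inner_add_right, Complex.add_re]
        congr 1
        have := inner_self_eq_norm_sq (𝕜 := ℂ) f
        simpa using this
      have h4 := abs_le.mp (hKinner f)
      rw [h3]
      nlinarith [h4.1]
    -- apply the anticommutator lemma
    have hXsym : ∀ a b : H, (inner ℂ (X a) b : ℂ) = inner ℂ a (X b) := by
      have hXsa : IsSelfAdjoint X := by
        rw [hX]
        exact hRsa.add hPsa
      intro a b
      have := (ContinuousLinearMap.isSelfAdjoint_iff_isSymmetric.mp hXsa) a b
      simpa using this
    have hXc : ∀ f : H, (1 - q) * ‖f‖^2 ≤ (inner ℂ f (X f) : ℂ).re := by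
      intro f
      have he : (inner ℂ f (X f) : ℂ) = inner ℂ f (Rop f) + inner ℂ f (P f) := by
        rw [hX]; simp [inner_add_right]
      rw [he, Complex.add_re]
      have := hPpos f
      have := hCpos f
      have := hRre f
      linarith
    have hc : (0:ℝ) < 1 - q := by linarith
    have hYpos : ∀ f : H, 0 ≤ (inner ℂ f (Y f) : ℂ).re :=
      nonneg_of_anticommutator X Y hXsym (1-q) hc hXc hanti
    -- sector property of the numerical range of C
    have hsector : ∀ f : H, |(inner ℂ f (C f) : ℂ).im| ≤ (inner ℂ f (C f) : ℂ).re := by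
      intro f
      have h1 : (inner ℂ f (P f) : ℂ).re ≤ (inner ℂ f (Rop f) : ℂ).re := by
        have := hYpos f
        have he : (inner ℂ f (Y f) : ℂ) = inner ℂ f (Rop f) - inner ℂ f (P f) := by
          rw [hY]; simp [inner_sub_right]
        rw [he, Complex.sub_re] at this
        linarith
      have h2 : |(inner ℂ f (Jop f) : ℂ).re| ≤ (inner ℂ f (P f) : ℂ).re := by
        rw [abs_le]
        constructor
        · have := hPpJ f
          have he : (inner ℂ f ((P + Jop) f) : ℂ) = inner ℂ f (P f) + inner ℂ f (Jop f) := by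
            simp [inner_add_right]
          rw [he, Complex.add_re] at this
          linarith
        · have := hPmJ f
          have he : (inner ℂ f ((P - Jop) f) : ℂ) = inner ℂ f (P f) - inner ℂ f (Jop f) := by
            simp [inner_sub_right]
          rw [he, Complex.sub_re] at this
          linarith
      rw [← hJre f, ← hRre f]
      exact h2.trans h1
    -- construct B
    set s : ℝ := Real.sqrt (r/2) with hs
    have hs0 : 0 < s := Real.sqrt_pos.mpr (by linarith)
    have hssq : s^2 = r/2 := Real.sq_sqrt (by linarith)
    set μ : ℂ := (s:ℂ) * (1 + Complex.I) with hμ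
    have hμsq : μ * μ = (r:ℂ) * Complex.I := by
      rw [hμ]
      have h1 : ((s:ℂ) * (1 + Complex.I)) * ((s:ℂ) * (1 + Complex.I))
          = (s:ℂ)^2 * ((1 + Complex.I)*(1 + Complex.I)) := by ring
      have h2 : ((1:ℂ) + Complex.I)*(1 + Complex.I) = 2 * Complex.I := by
        rw [show ((1:ℂ) + Complex.I)*(1 + Complex.I) = 1 + 2*Complex.I + Complex.I^2 from by
          ring, Complex.I_sq]
        ring
      have h3 : ((s:ℂ))^2 = ((r:ℝ):ℂ)/2 := by
        rw [← Complex.ofReal_pow, hssq]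
        push_cast
        ring
      rw [h1, h2, h3]
      ring
    have hμ0 : μ ≠ 0 := by
      rw [hμ]
      apply mul_ne_zero
      · exact_mod_cast ne_of_gt hs0
      · intro hcon
        have := congrArg Complex.im hcon
        simp at this
    refine ⟨μ • C, ?_, ?_, ?_⟩
    · -- B^2 = T + S
      have hr0' : ((r:ℝ):ℂ) ≠ 0 := by exact_mod_cast ne_of_gt hr0
      calc (μ • C)^2 = (μ * μ) • (C * C) := by
            rw [sq, smul_mul_smul_comm]
        _ = ((r:ℝ):ℂ) • (Complex.I • ((1 : H →L[ℂ] H) + K)) := by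
            rw [hμsq, hCC, ← smul_smul]
        _ = ((r:ℝ):ℂ) • (Complex.I • (((r:ℝ):ℂ)⁻¹ • A')) := by rw [h1K]
        _ = A := by
            rw [smul_smul, smul_smul]
            have h5 : ((r:ℝ):ℂ) * Complex.I * ((r:ℝ):ℂ)⁻¹ = Complex.I := by
              field_simp
            rw [h5, hA', smul_smul]
            have h6 : Complex.I * -Complex.I = 1 := by
              rw [mul_neg, Complex.I_mul_I, neg_neg]
            rw [h6, one_smul]
        _ = T + S := hA
    · -- spectrum in the first quadrant
      intro z hz
      have hspec := spectrum.unit_smul_eq_smul (R := ℂ) C (Units.mk0 μ hμ0)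
      rw [show μ • C = (Units.mk0 μ hμ0 : ℂˣ) • C from rfl] at hz
      rw [hspec] at hz
      obtain ⟨w, hw, hzw⟩ := hz
      have hzw' : z = μ * w := by simpa [Units.smul_def] using hzw.symm
      -- w - 1 in spectrum of C - 1
      have hw1 : ‖w - 1‖ ≤ q := by
        have hmem : w - 1 ∈ spectrum ℂ (C - 1) := by
          have h := spectrum.sub_singleton_eq (R := ℂ) C 1
          rw [map_one] at h
          rw [← h]
          exact ⟨w, hw, 1, rfl, rfl⟩
        exact (spectrum.norm_le_norm_of_mem hmem).trans hC1
      have hw2 : ‖w^2 - 1‖ ≤ q := by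
        have hsq : w^2 ∈ spectrum ℂ (C*C) := by
          have h := spectrum.subset_polynomial_aeval C (Polynomial.X^2 : Polynomial ℂ)
          have hmem : w^2 ∈ (fun k => Polynomial.eval k (Polynomial.X^2 : Polynomial ℂ))
              '' spectrum ℂ C := ⟨w, hw, by simp⟩
          have h2 := h hmem
          simpa [pow_two] using h2
        rw [hCC] at hsq
        have hmem : w^2 - 1 ∈ spectrum ℂ K := by
          have h := spectrum.sub_singleton_eq (R := ℂ) ((1 : H →L[ℂ] H) + K) 1
          rw [map_one] at h
          have h2 : (1 : H →L[ℂ] H) + K - 1 = K := by abel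
          rw [h2] at h
          rw [← h]
          exact ⟨w^2, hsq, 1, rfl, rfl⟩
        exact (spectrum.norm_le_norm_of_mem hmem).trans hKnorm
      -- coordinates
      have hare : 1 - q ≤ w.re := by
        have h1 : |(w - 1).re| ≤ ‖w - 1‖ := Complex.abs_re_le_norm _
        rw [Complex.sub_re, Complex.one_re] at h1
        have := abs_le.mp (h1.trans hw1)
        linarith [this.1]
      have hsqre : 1 - q ≤ w.re^2 - w.im^2 := by
        have h1 : |(w^2 - 1).re| ≤ ‖w^2 - 1‖ := Complex.abs_re_le_norm _
        have h2 : (w^2 - 1).re = w.re^2 - w.im^2 - 1 := by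
          rw [Complex.sub_re, Complex.one_re, sq, Complex.mul_re]
          ring
        rw [h2] at h1
        have := abs_le.mp (h1.trans hw2)
        linarith [this.1]
      have hwre : 0 < w.re := by linarith
      have habs : |w.im| < w.re := by nlinarith [abs_nonneg w.im, sq_abs w.im]
      have hab := abs_lt.mp habs
      rw [hzw']
      constructor
      · rw [Complex.mul_re, hμ]
        simp [Complex.add_re, Complex.add_im, Complex.mul_re, Complex.mul_im]
        nlinarith [hs0.le, hab.1, hab.2]
      · rw [Complex.mul_im, hμ]
        simp [Complex.add_re, Complex.add_im, Complex.mul_re, Complex.mul_im]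
        nlinarith [hs0.le, hab.1, hab.2]
    · -- contraction property
      intro x hx
      have hdiss : ∀ f : H, (inner ℂ f ((Complex.I • (μ • C)) f) : ℂ).re ≤ 0 * ‖f‖^2 := by
        intro f
        have he : (inner ℂ f ((Complex.I • (μ • C)) f) : ℂ)
            = (Complex.I * μ) * inner ℂ f (C f) := by
          simp [inner_smul_right]
          ring
        rw [he]
        have h1 : Complex.I * μ = (s:ℂ) * (-1 + Complex.I) := by
          rw [hμ]
          rw [show Complex.I * ((s:ℂ) * (1 + Complex.I)) = (s:ℂ) * (Complex.I + Complex.I^2)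
            from by ring, Complex.I_sq]
          ring
        rw [h1]
        have h2 : ((s:ℂ) * (-1 + Complex.I) * (inner ℂ f (C f) : ℂ)).re
            = s * (-(inner ℂ f (C f) : ℂ).re - (inner ℂ f (C f) : ℂ).im) := by
          simp [Complex.mul_re, Complex.mul_im, Complex.add_re, Complex.add_im]
          ring
        rw [h2]
        have h3 := hsector f
        have h4 := abs_le.mp h3
        have : -(inner ℂ f (C f) : ℂ).re - (inner ℂ f (C f) : ℂ).im ≤ 0 := by
          linarith [h4.1]
        nlinarith [hs0.le]
      have hexpeq : NormedSpace.exp (x • (Complex.I • (μ • C)))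
          = NormedSpace.exp (x • (Complex.I • (μ • C))) := by
        rfl
      rw [hexpeq]
      apply ContinuousLinearMap.opNorm_le_bound _ zero_le_one
      intro f
      have := exp_apply_norm_sq_le (Complex.I • (μ • C)) 0 hdiss x hx f
      rw [show (2:ℝ) * 0 * x = 0 by ring, Real.exp_zero, one_mul] at this
      have h1 : 0 ≤ ‖NormedSpace.exp (x • (Complex.I • (μ • C))) f‖ := norm_nonneg _
      have h2 : 0 ≤ ‖f‖ := norm_nonneg _
      nlinarith
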